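/- Let (X,μ,T) be an ergodic system with a continuous factor map π to its Kronecker factor (Z,m,R), and z ↦ η_z a disintegration of μ over π. Then the map s ↦ σ_s from X to the space of Borel probability measures on X × X (with the weak* topology), where σ_s = ∫_Z η_{π(s)+z} × η_{π(s)+2z} dm(z), is continuous. -/

import Mathlib

open MeasureTheory Filter Set Topology
open scoped ENNReal Pointwise BoundedContinuousFunction

section density

variable {Z : Type*} [MetricSpace Z] [CompactSpace Z] [AddCommGroup Z]
  [IsTopologicalAddGroup Z] [MeasurableSpace Z] [BorelSpace Z]

lemma sigma_aux_dense (m : Measure Z) [IsProbabilityMeasure m] [m.IsAddHaarMeasure]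
    (α : Z) (hR : Ergodic (fun z => z + α) m) :
    ((AddSubgroup.zmultiples α).topologicalClosure : Set Z) = Set.univ := by
  set K : AddSubgroup Z := (AddSubgroup.zmultiples α).topologicalClosure with hKdef
  have hKclosed : IsClosed (K : Set Z) := AddSubgroup.isClosed_topologicalClosure _
  have hKcompact : IsCompact (K : Set Z) := hKclosed.isCompact
  have hαK : α ∈ K := (AddSubgroup.le_topologicalClosure _) (AddSubgroup.mem_zmultiples α)
  by_contra hne
  obtain ⟨w, hw⟩ : ∃ w : Z, w ∉ (K : Set Z) := by
    by_contra h
    push_neg at h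
    exact hne (Set.eq_univ_iff_forall.2 h)
  -- separate
  obtain ⟨V₀, hV₀, hKV₀⟩ := compact_open_separated_add_right hKcompact
    (isOpen_compl_singleton (x := w)) (by simpa using hw)
  -- find open V ∋ 0 with V - V ⊆ V₀
  have hsub : Tendsto (fun p : Z × Z => p.1 - p.2) (𝓝 0 ×ˢ 𝓝 0) (𝓝 (0 : Z)) := by
    have h := (continuous_sub (G := Z)).tendsto (0, 0)
    rw [nhds_prod_eq] at h
    simpa using h
  obtain ⟨V₁, hV₁, V₂, hV₂, hV₁₂⟩ := Filter.mem_prod_iff.1 (hsub hV₀)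
  obtain ⟨V, hVsub, hVopen, hV0⟩ := mem_nhds_iff.1 (Filter.inter_mem hV₁ hV₂)
  have hVV : ∀ x ∈ V, ∀ y ∈ V, x - y ∈ V₀ := fun x hx y hy =>
    hV₁₂ (Set.mk_mem_prod (hVsub hx).1 (hVsub hy).2)
  -- the invariant open set U = V + K and its translate
  set U : Set Z := V + (K : Set Z) with hU
  have hUopen : IsOpen U := hVopen.add_right
  have hUkey : ∀ v, v + α ∈ U ↔ v ∈ U := by
    intro v
    constructor
    · rintro ⟨x, hx, y, hy, hxy⟩
      refine ⟨x, hx, y - α, K.sub_mem hy hαK, ?_⟩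
      have h' : x + y = v + α := hxy
      calc x + (y - α) = x + y - α := by abel
        _ = v := by rw [h']; abel
    · rintro ⟨x, hx, y, hy, rfl⟩
      exact ⟨x, hx, y + α, K.add_mem hy hαK, by dsimp only; abel⟩
  set S₂ : Set Z := (fun v => w + v) '' U with hS₂
  have hS₂open : IsOpen S₂ := (isOpenMap_add_left w) U hUopen
  have hS₂key : ∀ v, v + α ∈ S₂ ↔ v ∈ S₂ := by
    intro v
    constructor
    · rintro ⟨u, hu, huv⟩
      refine ⟨u - α, (hUkey (u - α)).1 (by simpa using hu), ?_⟩
      have h' : w + u = v + α := huv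
      calc w + (u - α) = w + u - α := by abel
        _ = v := by rw [h']; abel
    · rintro ⟨u, hu, rfl⟩
      exact ⟨u + α, (hUkey u).2 hu, by dsimp only; abel⟩
  -- both have full measure
  have hfull : ∀ S : Set Z, IsOpen S → S.Nonempty → (∀ v, v + α ∈ S ↔ v ∈ S) → m Sᶜ = 0 := by
    intro S hSopen hSne hSkey
    have hpre : (fun z => z + α) ⁻¹' S = S := by
      ext v; exact hSkey v
    rcases hR.measure_self_or_compl_eq_zero hSopen.measurableSet hpre with h | h
    · exact absurd h (hSopen.measure_ne_zero m hSne)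
    · exact h
  have h₁ : m Uᶜ = 0 := hfull U hUopen ⟨0, 0, hV0, 0, K.zero_mem, by abel⟩ hUkey
  have h₂ : m S₂ᶜ = 0 := hfull S₂ hS₂open
    ⟨w, 0, ⟨0, hV0, 0, K.zero_mem, by simp⟩, by simp⟩ hS₂key
  -- disjointness
  have hdisj : U ∩ S₂ = ∅ := by
    ext x
    simp only [Set.mem_inter_iff, Set.mem_empty_iff_false, iff_false, not_and]
    rintro ⟨v₁, hv₁, k₁, hk₁, hx₁⟩ ⟨u, ⟨v₂, hv₂, k₂, hk₂, hu⟩, hx₂⟩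
    have e1 : v₁ + k₁ = x := hx₁
    have e2 : w + u = x := hx₂
    have e3 : v₂ + k₂ = u := hu
    have e : w + (v₂ + k₂) = v₁ + k₁ := by rw [e3, e2, e1]
    have hw2 : w = (k₁ - k₂) + (v₁ - v₂) := by
      have h4 := eq_sub_of_add_eq e
      rw [h4]; abel
    have hmem : w ∈ (K : Set Z) + V₀ :=
      ⟨k₁ - k₂, K.sub_mem hk₁ hk₂, v₁ - v₂, hVV _ hv₁ _ hv₂, hw2.symm⟩
    exact hKV₀ hmem rfl
  have : m Set.univ = 0 := by
    have : (Set.univ : Set Z) ⊆ Uᶜ ∪ S₂ᶜ := by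
      intro x _
      by_contra hx
      simp only [Set.mem_union, Set.mem_compl_iff, not_or, not_not] at hx
      have hmem : x ∈ U ∩ S₂ := ⟨hx.1, hx.2⟩
      rw [hdisj] at hmem
      exact hmem
    have hle : m Set.univ ≤ m (Uᶜ ∪ S₂ᶜ) := measure_mono this
    have hun : m (Uᶜ ∪ S₂ᶜ) ≤ m Uᶜ + m S₂ᶜ := measure_union_le _ _
    rw [h₁, h₂] at hun
    have : m Set.univ = 0 := by
      simpa using (hle.trans hun)
    exact this
  simp [measure_univ] at this

end density

section core

variable {Z : Type*} [MetricSpace Z] [CompactSpace Z] [AddCommGroup Z]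
  [IsTopologicalAddGroup Z] [MeasurableSpace Z] [BorelSpace Z]

lemma sigma_aux_surj (m : Measure Z) [IsProbabilityMeasure m] [m.IsAddHaarMeasure]
    (α : Z) (hR : Ergodic (fun z => z + α) m) :
    Function.Surjective (fun p : Z × Bool => (cond p.2 α 0) + (p.1 + p.1)) := by
  intro w
  have hdense := sigma_aux_dense m α hR
  have hw : w ∈ closure ((AddSubgroup.zmultiples α : AddSubgroup Z) : Set Z) := by
    rw [← AddSubgroup.topologicalClosure_coe, hdense]; trivial
  set R : Set Z := (range fun k : Z => k + k) ∪ (range fun k : Z => α + (k + k)) with hR'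
  have hRclosed : IsClosed R :=
    IsClosed.union (isCompact_range (continuous_id.add continuous_id)).isClosed
      (isCompact_range (continuous_const.add (continuous_id.add continuous_id))).isClosed
  have hsub : ((AddSubgroup.zmultiples α : AddSubgroup Z) : Set Z) ⊆ R := by
    intro x hx
    obtain ⟨n, rfl⟩ := AddSubgroup.mem_zmultiples_iff.1 hx
    rcases Int.even_or_odd n with ⟨j, hj⟩ | ⟨j, hj⟩
    · left; exact ⟨j • α, by rw [hj, add_zsmul]⟩
    · right
      refine ⟨j • α, ?_⟩
      show α + (j • α + j • α) = n • α
      rw [hj, add_zsmul, one_zsmul, two_mul, add_zsmul]; abel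
  have hwR : w ∈ R := (closure_minimal hsub hRclosed) hw
  rcases hwR with ⟨k, hk⟩ | ⟨k, hk⟩
  · exact ⟨(k, false), by simpa using hk⟩
  · exact ⟨(k, true), by simpa using hk⟩

lemma sigma_aux_core (m : Measure Z) [IsProbabilityMeasure m] [m.IsAddHaarMeasure]
    (α : Z) (hR : Ergodic (fun z => z + α) m)
    (φ ψ : Z → ℝ) (hφ : Measurable φ) (hψ : Measurable ψ) (C : ℝ)
    (hφb : ∀ z, |φ z| ≤ C) (hψb : ∀ z, |ψ z| ≤ C) :
    Continuous fun w => ∫ z, φ (w + z) * ψ (w + (z + z)) ∂m := by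
  have hC : 0 ≤ C := le_trans (abs_nonneg _) (hφb 0)
  have hint : ∀ (B : ℝ) (f : Z → ℝ), Measurable f → (∀ z, |f z| ≤ B) → Integrable f m :=
    fun B f hf hb => ⟨hf.aestronglyMeasurable,
      HasFiniteIntegral.of_bounded (C := B)
        (Filter.Eventually.of_forall (fun z => by simpa [Real.norm_eq_abs] using hb z))⟩
  set I : Z → ℝ := fun w => ∫ z, φ z * ψ (z + z - w) ∂m with hI
  have hkey : (fun w => ∫ z, φ (w + z) * ψ (w + (z + z)) ∂m) = I := by
    funext w
    have h1 := integral_add_right_eq_self (μ := m) (fun z => φ z * ψ (z + z - w)) w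
    rw [hI]
    dsimp only
    rw [← h1]
    refine integral_congr_ae (Filter.Eventually.of_forall fun z => ?_)
    have e1 : z + w = w + z := by abel
    have e2 : (z + w) + (z + w) - w = w + (z + z) := by abel
    dsimp only
    rw [e2, e1]
  rw [hkey]
  -- continuity for fixed coset representative
  have hgoal : ∀ c : Z, Continuous fun k => ∫ z, φ (z + k) * ψ (z + z - c) ∂m := by
    intro c
    set ψc : Z → ℝ := fun z => ψ (z + z - c) with hψc
    have hψcm : Measurable ψc :=
      hψ.comp ((continuous_id.add continuous_id).sub continuous_const).measurable
    have hψcb : ∀ z, |ψc z| ≤ C := fun z => hψb _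
    have hφint : Integrable φ m := hint C φ hφ hφb
    have happrox : ∀ n : ℕ, ∃ u : Z →ᵇ ℝ, (∫ z, ‖φ z - u z‖ ∂m) ≤ ((n : ℝ)+1)⁻¹ ∧
        Integrable u m := fun n =>
      hφint.exists_boundedContinuous_integral_sub_le (by positivity)
    choose u hu hui using happrox
    set M : ℕ → Z → ℝ := fun n k => ∫ z, (u n) (z + k) * ψc z ∂m with hM
    have hMcont : ∀ n, Continuous (M n) := by
      intro n
      apply continuous_of_dominated (bound := fun _ => ‖u n‖ * C)
      · intro k
        exact (((u n).continuous.comp (continuous_id.add continuous_const)).aestronglyMeasurable).mul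
          hψcm.aestronglyMeasurable
      · intro k
        refine Filter.Eventually.of_forall fun z => ?_
        rw [norm_mul]
        exact mul_le_mul ((u n).norm_coe_le_norm _)
          (by simpa [Real.norm_eq_abs] using hψcb z) (norm_nonneg _) (norm_nonneg _)
      · exact integrable_const _
      · refine Filter.Eventually.of_forall fun z => ?_
        exact ((u n).continuous.comp (continuous_const.add continuous_id)).mul continuous_const
    have hunif : TendstoUniformly M (fun k => ∫ z, φ (z + k) * ψc z ∂m) atTop := by
      rw [Metric.tendstoUniformly_iff]
      intro ε hε
      obtain ⟨N, hN⟩ := exists_nat_gt (C / ε)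
      filter_upwards [Filter.eventually_ge_atTop N] with n hn k
      have htrans : Measurable fun z : Z => z + k := (continuous_id.add continuous_const).measurable
      have hfk : Integrable (fun z => φ (z + k) * ψc z) m := by
        refine hint (C * C) _ ((hφ.comp htrans).mul hψcm) fun z => ?_
        rw [abs_mul]
        exact mul_le_mul (hφb _) (hψcb _) (abs_nonneg _) hC
      have hgk : Integrable (fun z => (u n) (z + k) * ψc z) m := by
        refine hint (‖u n‖ * C) _ (((u n).continuous.measurable.comp htrans).mul hψcm) fun z => ?_
        rw [abs_mul]
        exact mul_le_mul (by simpa [Real.norm_eq_abs] using (u n).norm_coe_le_norm (z + k))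
          (hψcb _) (abs_nonneg _) (norm_nonneg _)
      rw [Real.dist_eq]
      have hsubi : (∫ z, φ (z + k) * ψc z ∂m) - M n k
          = ∫ z, (φ (z + k) - (u n) (z + k)) * ψc z ∂m := by
        rw [hM]
        dsimp only
        rw [← integral_sub hfk hgk]
        refine integral_congr_ae (Filter.Eventually.of_forall fun z => ?_)
        ring
      rw [hsubi]
      have hdiffint : Integrable (fun z => ‖φ (z + k) - (u n) (z + k)‖) m := by
        have := (((hint C (fun z => φ (z + k)) (hφ.comp htrans) fun z => hφb _)).sub
          (hint ‖u n‖ (fun z => (u n) (z + k)) ((u n).continuous.measurable.comp htrans)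
            fun z => by simpa [Real.norm_eq_abs] using (u n).norm_coe_le_norm (z + k))).norm
        exact this
      calc |∫ z, (φ (z + k) - (u n) (z + k)) * ψc z ∂m|
          ≤ ∫ z, ‖(φ (z + k) - (u n) (z + k)) * ψc z‖ ∂m := by
            simpa [Real.norm_eq_abs] using
              norm_integral_le_integral_norm (fun z => (φ (z + k) - (u n) (z + k)) * ψc z) (μ := m)
        _ ≤ ∫ z, ‖φ (z + k) - (u n) (z + k)‖ * C ∂m := by
            refine integral_mono ?_ (hdiffint.mul_const C) fun z => ?_
            · have : Integrable (fun z => (φ (z + k) - (u n) (z + k)) * ψc z) m := by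
                refine (hfk.sub hgk).congr (Filter.Eventually.of_forall fun z => ?_)
                show φ (z + k) * ψc z - (u n) (z + k) * ψc z = _
                ring
              exact this.norm
            · rw [norm_mul]
              exact mul_le_mul_of_nonneg_left (by simpa [Real.norm_eq_abs] using hψcb z)
                (norm_nonneg _)
        _ = (∫ z, ‖φ (z + k) - (u n) (z + k)‖ ∂m) * C := integral_mul_const C _
        _ = (∫ z, ‖φ z - (u n) z‖ ∂m) * C := by
            rw [integral_add_right_eq_self (μ := m) (fun z => ‖φ z - (u n) z‖) k]
        _ ≤ ((n : ℝ) + 1)⁻¹ * C := mul_le_mul_of_nonneg_right (hu n) hC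
        _ < ε := by
          have h1 : C / ε < (n : ℝ) + 1 :=
            lt_of_lt_of_le hN (le_trans (by exact_mod_cast hn) (le_add_of_nonneg_right zero_le_one))
          have h2 : C < ((n : ℝ) + 1) * ε := (div_lt_iff₀ hε).1 h1
          have h3 : (0 : ℝ) < (n : ℝ) + 1 := by positivity
          calc ((n : ℝ) + 1)⁻¹ * C < ((n : ℝ) + 1)⁻¹ * (((n : ℝ) + 1) * ε) :=
                mul_lt_mul_of_pos_left h2 (inv_pos.2 h3)
            _ = ε := by field_simp
    exact hunif.continuous (Filter.Eventually.of_forall hMcont).frequently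
  -- quotient map along doubling
  set D : Z × Bool → Z := fun p => (cond p.2 α 0) + (p.1 + p.1) with hD
  have hDcont : Continuous D :=
    ((continuous_of_discreteTopology (f := fun b : Bool => cond b α 0)).comp continuous_snd).add
      (continuous_fst.add continuous_fst)
  have hDq : Topology.IsQuotientMap D :=
    (hDcont.isClosedMap).isQuotientMap hDcont (sigma_aux_surj m α hR)
  rw [hDq.continuous_iff]
  have hIDc : ∀ (c : Z) (k : Z), I (c + (k + k)) = ∫ z, φ (z + k) * ψ (z + z - c) ∂m := by
    intro c k
    have h1 := integral_add_right_eq_self (μ := m)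
      (fun z => φ z * ψ (z + z - (c + (k + k)))) k
    rw [hI]
    dsimp only
    rw [← h1]
    refine integral_congr_ae (Filter.Eventually.of_forall fun z => ?_)
    have e : (z + k) + (z + k) - (c + (k + k)) = z + z - c := by abel
    dsimp only
    rw [e]
  have hID : (I ∘ D) = fun p : Z × Bool =>
      (cond p.2 (1 : ℝ) 0) * (∫ z, φ (z + p.1) * ψ (z + z - α) ∂m)
        + (cond p.2 (0 : ℝ) 1) * (∫ z, φ (z + p.1) * ψ (z + z - 0) ∂m) := by
    funext p
    rcases p with ⟨k, b⟩
    cases b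
    · simp only [Function.comp_apply, hD, Bool.cond_false, hIDc 0 k]
      ring
    · simp only [Function.comp_apply, hD, Bool.cond_true, hIDc α k]
      ring
  rw [hID]
  apply Continuous.add <;> apply Continuous.mul
  · exact (continuous_of_discreteTopology (f := fun b : Bool => cond b (1:ℝ) 0)).comp continuous_snd
  · exact (hgoal α).comp continuous_fst
  · exact (continuous_of_discreteTopology (f := fun b : Bool => cond b (0:ℝ) 1)).comp continuous_snd
  · exact (hgoal 0).comp continuous_fst

end core

section bindlemmas

lemma sigma_aux_meas_integral {X : Type*} [MeasurableSpace X] {Z : Type*} [MeasurableSpace Z]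
    (η : Z → Measure X) (hηmeas : Measurable η) (hηprob : ∀ z, IsProbabilityMeasure (η z))
    (F : X → ℝ) (hF : Measurable F) (C : ℝ) (hb : ∀ x, |F x| ≤ C) :
    Measurable fun z => ∫ x, F x ∂η z := by
  have hint : ∀ z, Integrable F (η z) := fun z =>
    ⟨hF.aestronglyMeasurable, HasFiniteIntegral.of_bounded (C := C)
      (Filter.Eventually.of_forall fun x => by simpa [Real.norm_eq_abs] using hb x)⟩
  have heq : (fun z => ∫ x, F x ∂η z) = fun z =>
      (∫⁻ x, ENNReal.ofReal (F x) ∂η z).toReal - (∫⁻ x, ENNReal.ofReal (-F x) ∂η z).toReal := by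
    funext z
    exact integral_eq_lintegral_pos_part_sub_lintegral_neg_part (hint z)
  rw [heq]
  exact (((Measure.measurable_lintegral (ENNReal.measurable_ofReal.comp hF)).comp
      hηmeas).ennreal_toReal).sub
    (((Measure.measurable_lintegral (ENNReal.measurable_ofReal.comp hF.neg)).comp
      hηmeas).ennreal_toReal)

lemma sigma_aux_integral_bind {A B : Type*} [MeasurableSpace A] [MeasurableSpace B]
    (ν : Measure A) [IsProbabilityMeasure ν] (κ : A → Measure B) (hκ : Measurable κ)
    (hκp : ∀ a, IsProbabilityMeasure (κ a)) (f : B → ℝ) (hf : Measurable f) (C : ℝ)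
    (hb : ∀ x, |f x| ≤ C) :
    ∫ x, f x ∂(ν.bind κ) = ∫ a, ∫ x, f x ∂κ a ∂ν := by
  haveI : IsProbabilityMeasure (ν.bind κ) := by
    constructor
    rw [Measure.bind_apply MeasurableSet.univ hκ.aemeasurable]
    simp [measure_univ]
  have hbind_int : Integrable f (ν.bind κ) :=
    ⟨hf.aestronglyMeasurable, HasFiniteIntegral.of_bounded (C := C)
      (Filter.Eventually.of_forall fun x => by simpa [Real.norm_eq_abs] using hb x)⟩
  have hintz : ∀ a, Integrable f (κ a) := fun a =>
    ⟨hf.aestronglyMeasurable, HasFiniteIntegral.of_bounded (C := C)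
      (Filter.Eventually.of_forall fun x => by simpa [Real.norm_eq_abs] using hb x)⟩
  have hP : Measurable fun x => ENNReal.ofReal (f x) := ENNReal.measurable_ofReal.comp hf
  have hN : Measurable fun x => ENNReal.ofReal (-f x) := ENNReal.measurable_ofReal.comp hf.neg
  have hPb : ∀ a, (∫⁻ x, ENNReal.ofReal (f x) ∂κ a) ≤ ENNReal.ofReal C := by
    intro a
    calc ∫⁻ x, ENNReal.ofReal (f x) ∂κ a
        ≤ ∫⁻ _, ENNReal.ofReal C ∂κ a :=
          lintegral_mono fun x => ENNReal.ofReal_le_ofReal (le_trans (le_abs_self _) (hb x))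
      _ = ENNReal.ofReal C := by simp [measure_univ]
  have hNb : ∀ a, (∫⁻ x, ENNReal.ofReal (-f x) ∂κ a) ≤ ENNReal.ofReal C := by
    intro a
    calc ∫⁻ x, ENNReal.ofReal (-f x) ∂κ a
        ≤ ∫⁻ _, ENNReal.ofReal C ∂κ a :=
          lintegral_mono fun x => ENNReal.ofReal_le_ofReal (le_trans (neg_le_abs _) (hb x))
      _ = ENNReal.ofReal C := by simp [measure_univ]
  have hmeasP : Measurable fun a => ∫⁻ x, ENNReal.ofReal (f x) ∂κ a :=
    (Measure.measurable_lintegral hP).comp hκ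
  have hmeasN : Measurable fun a => ∫⁻ x, ENNReal.ofReal (-f x) ∂κ a :=
    (Measure.measurable_lintegral hN).comp hκ
  have hintP : Integrable (fun a => (∫⁻ x, ENNReal.ofReal (f x) ∂κ a).toReal) ν := by
    refine ⟨hmeasP.ennreal_toReal.aestronglyMeasurable,
      HasFiniteIntegral.of_bounded (C := (ENNReal.ofReal C).toReal)
        (Filter.Eventually.of_forall fun a => ?_)⟩
    rw [Real.norm_eq_abs, abs_of_nonneg ENNReal.toReal_nonneg]
    exact ENNReal.toReal_mono ENNReal.ofReal_ne_top (hPb a)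
  have hintN : Integrable (fun a => (∫⁻ x, ENNReal.ofReal (-f x) ∂κ a).toReal) ν := by
    refine ⟨hmeasN.ennreal_toReal.aestronglyMeasurable,
      HasFiniteIntegral.of_bounded (C := (ENNReal.ofReal C).toReal)
        (Filter.Eventually.of_forall fun a => ?_)⟩
    rw [Real.norm_eq_abs, abs_of_nonneg ENNReal.toReal_nonneg]
    exact ENNReal.toReal_mono ENNReal.ofReal_ne_top (hNb a)
  rw [integral_eq_lintegral_pos_part_sub_lintegral_neg_part hbind_int,
    Measure.lintegral_bind hκ.aemeasurable hP.aemeasurable, Measure.lintegral_bind hκ.aemeasurable hN.aemeasurable]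
  have hRHS : ∫ a, ∫ x, f x ∂κ a ∂ν
      = ∫ a, ((∫⁻ x, ENNReal.ofReal (f x) ∂κ a).toReal
          - (∫⁻ x, ENNReal.ofReal (-f x) ∂κ a).toReal) ∂ν :=
    integral_congr_ae (Filter.Eventually.of_forall fun a =>
      integral_eq_lintegral_pos_part_sub_lintegral_neg_part (hintz a))
  rw [hRHS, integral_sub hintP hintN,
    integral_toReal hmeasP.aemeasurable
      (Filter.Eventually.of_forall fun a => lt_of_le_of_lt (hPb a) ENNReal.ofReal_lt_top),
    integral_toReal hmeasN.aemeasurable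
      (Filter.Eventually.of_forall fun a => lt_of_le_of_lt (hNb a) ENNReal.ofReal_lt_top)]

end bindlemmas

/-- the map `s ↦ σ_s` is continuous from `X` to the space of Borel
probability measures on `X × X` with the weak* topology. -/
theorem sigma_continuous
    {X : Type*} [MetricSpace X] [CompactSpace X] [MeasurableSpace X] [BorelSpace X]
    {Z : Type*} [MetricSpace Z] [CompactSpace Z] [AddCommGroup Z]
    [IsTopologicalAddGroup Z] [MeasurableSpace Z] [BorelSpace Z]
    (μ : Measure X) [IsProbabilityMeasure μ]
    (T : X → X) (hThom : IsHomeomorph T) (hT : Ergodic T μ)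
    (m : Measure Z) [IsProbabilityMeasure m] [m.IsAddHaarMeasure]
    (α : Z) (hR : Ergodic (fun z => z + α) m)
    (π : X → Z) (hπcont : Continuous π) (hπT : ∀ x, π (T x) = π x + α)
    (hπm : μ.map π = m)
    -- maximality of the Kronecker factor: every eigenfunction of `T` factors through `π`
    (hKron : ∀ (f : X → ℂ) (c : ℂ), Measurable f → (∀ᵐ x ∂μ, f (T x) = c * f x) →
      ∃ g : Z → ℂ, Measurable g ∧ ∀ᵐ x ∂μ, f x = g (π x))
    -- `η` is a disintegration of `μ` over `π`
    (η : Z → Measure X) (hηprob : ∀ z, IsProbabilityMeasure (η z))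
    (hηmeas : Measurable η)
    (hηdis : ∀ s D : Set _, MeasurableSet s → MeasurableSet D →
      μ (s ∩ π ⁻¹' D) = ∫⁻ z in D, η z s ∂m)
    (hηfiber : ∀ᵐ z ∂m, η z (π ⁻¹' {z}) = 1)
    -- `σ_s = ∫_Z η_{π(s)+z} × η_{π(s)+2z} dm(z)`, as a probability measure
    (σ : X → ProbabilityMeasure (X × X))
    (hσ : ∀ s : X, (σ s : Measure (X × X)) =
      m.bind (fun z => (η (π s + z)).prod (η (π s + (z + z))))) :
    Continuous σ := by
  -- integrability of continuous functions against the `σ` measures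
  have hintc : ∀ (h : C(X × X, ℝ)) (t : X), Integrable h (σ t : Measure (X × X)) := fun h t =>
    ⟨h.continuous.measurable.aestronglyMeasurable,
      HasFiniteIntegral.of_bounded (C := ‖h‖)
        (Filter.Eventually.of_forall fun p => h.norm_coe_le_norm p)⟩
  -- main claim: for continuous test functions, the integral varies continuously
  suffices hmain : ∀ g : C(X × X, ℝ), Continuous fun t => ∫ p, g p ∂(σ t : Measure (X × X)) by
    rw [continuous_iff_continuousAt]
    intro s
    apply ProbabilityMeasure.tendsto_iff_forall_integral_tendsto.mpr
    intro f
    exact (hmain ⟨f, f.continuous⟩).tendsto s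
  -- step 1: products of continuous functions
  have hprod : ∀ F G : C(X, ℝ),
      Continuous fun t => ∫ p : X × X, F p.1 * G p.2 ∂(σ t : Measure (X × X)) := by
    intro F G
    set φ : Z → ℝ := fun a => ∫ x, F x ∂η a with hφdef
    set ψ : Z → ℝ := fun a => ∫ x, G x ∂η a with hψdef
    have hφm : Measurable φ := sigma_aux_meas_integral η hηmeas hηprob F F.continuous.measurable
      ‖F‖ (fun x => by simpa [Real.norm_eq_abs] using F.norm_coe_le_norm x)
    have hψm : Measurable ψ := sigma_aux_meas_integral η hηmeas hηprob G G.continuous.measurable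
      ‖G‖ (fun x => by simpa [Real.norm_eq_abs] using G.norm_coe_le_norm x)
    have hbnd : ∀ (F' : C(X, ℝ)) (a : Z), |∫ x, F' x ∂η a| ≤ ‖F'‖ := by
      intro F' a
      haveI := hηprob a
      have := norm_integral_le_of_norm_le_const (μ := η a) (C := ‖F'‖)
        (Filter.Eventually.of_forall fun x => F'.norm_coe_le_norm x)
      simpa [Real.norm_eq_abs, measure_univ] using this
    have hcore : Continuous fun w => ∫ z, φ (w + z) * ψ (w + (z + z)) ∂m :=
      sigma_aux_core m α hR φ ψ hφm hψm (max ‖F‖ ‖G‖)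
        (fun a => le_trans (hbnd F a) (le_max_left _ _))
        (fun a => le_trans (hbnd G a) (le_max_right _ _))
    have hkey : ∀ t : X, ∫ p : X × X, F p.1 * G p.2 ∂(σ t : Measure (X × X))
        = ∫ z, φ (π t + z) * ψ (π t + (z + z)) ∂m := by
      intro t
      rw [hσ t]
      have hprob : ∀ z : Z, IsProbabilityMeasure ((η (π t + z)).prod (η (π t + (z + z)))) := by
        intro z
        haveI := hηprob (π t + z)
        haveI := hηprob (π t + (z + z))
        infer_instance
      have hκm : Measurable fun z => (η (π t + z)).prod (η (π t + (z + z))) := by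
        let κ₁ : ProbabilityTheory.Kernel Z X :=
          ⟨fun z => η (π t + z), hηmeas.comp (continuous_const.add continuous_id).measurable⟩
        let κ₂ : ProbabilityTheory.Kernel Z X :=
          ⟨fun z => η (π t + (z + z)),
            hηmeas.comp (continuous_const.add (continuous_id.add continuous_id)).measurable⟩
        haveI : ProbabilityTheory.IsMarkovKernel κ₁ := ⟨fun a => hηprob _⟩
        haveI : ProbabilityTheory.IsMarkovKernel κ₂ := ⟨fun a => hηprob _⟩
        have heq : (fun z => (η (π t + z)).prod (η (π t + (z + z))))
            = fun z => (κ₁.prod κ₂) z := by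
          funext z
          rw [ProbabilityTheory.Kernel.prod_apply]
          rfl
        rw [heq]
        exact (κ₁.prod κ₂).measurable
      rw [sigma_aux_integral_bind m _ hκm hprob (fun p : X × X => F p.1 * G p.2)
        ((F.continuous.measurable.comp measurable_fst).mul
          (G.continuous.measurable.comp measurable_snd)) (‖F‖ * ‖G‖)
        (fun p => by
          rw [abs_mul]
          exact mul_le_mul (by simpa [Real.norm_eq_abs] using F.norm_coe_le_norm p.1)
            (by simpa [Real.norm_eq_abs] using G.norm_coe_le_norm p.2)
            (abs_nonneg _) (norm_nonneg _))]
      refine integral_congr_ae (Filter.Eventually.of_forall fun z => ?_)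
      haveI := hηprob (π t + z)
      haveI := hηprob (π t + (z + z))
      dsimp only
      rw [integral_prod_mul]
    have heq2 : (fun t => ∫ p : X × X, F p.1 * G p.2 ∂(σ t : Measure (X × X)))
        = (fun w => ∫ z, φ (w + z) * ψ (w + (z + z)) ∂m) ∘ π := funext hkey
    rw [heq2]
    exact hcore.comp hπcont
  -- step 2: the linear span of products
  set P : Set C(X × X, ℝ) := {h | ∃ F G : C(X, ℝ), ∀ p : X × X, h p = F p.1 * G p.2} with hP
  have hspan_cont : ∀ h ∈ Submodule.span ℝ P,
      Continuous fun t => ∫ p, h p ∂(σ t : Measure (X × X)) := by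
    intro h hh
    induction hh using Submodule.span_induction with
    | mem h hmem =>
      obtain ⟨F, G, e⟩ := hmem
      have : (fun t => ∫ p, h p ∂(σ t : Measure (X × X)))
          = fun t => ∫ p : X × X, F p.1 * G p.2 ∂(σ t : Measure (X × X)) := by
        funext t
        exact integral_congr_ae (Filter.Eventually.of_forall fun p => e p)
      rw [this]
      exact hprod F G
    | zero => simpa using continuous_const
    | add x y hx hy ihx ihy =>
      have : (fun t => ∫ p, (x + y) p ∂(σ t : Measure (X × X)))
          = fun t => (∫ p, x p ∂(σ t : Measure (X × X))) + ∫ p, y p ∂(σ t : Measure (X × X)) := by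
        funext t
        rw [← integral_add (hintc x t) (hintc y t)]
        exact integral_congr_ae (Filter.Eventually.of_forall fun p => by simp)
      rw [this]
      exact ihx.add ihy
    | smul a x hx ihx =>
      have : (fun t => ∫ p, (a • x) p ∂(σ t : Measure (X × X)))
          = fun t => a • ∫ p, x p ∂(σ t : Measure (X × X)) := by
        funext t
        rw [← integral_smul]
        exact integral_congr_ae (Filter.Eventually.of_forall fun p => by simp)
      rw [this]
      exact ((continuous_const (y := a)).smul ihx)
  -- step 3: Stone-Weierstrass
  have hone : (1 : C(X × X, ℝ)) ∈ Submodule.span ℝ P :=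
    Submodule.subset_span ⟨1, 1, fun p => by simp⟩
  have hmulP : ∀ a ∈ P, ∀ b ∈ P, a * b ∈ P := by
    rintro a ⟨F₁, G₁, e₁⟩ b ⟨F₂, G₂, e₂⟩
    refine ⟨F₁ * F₂, G₁ * G₂, fun p => ?_⟩
    simp only [ContinuousMap.mul_apply, e₁ p, e₂ p]
    ring
  have hmul : ∀ x y : C(X × X, ℝ), x ∈ Submodule.span ℝ P → y ∈ Submodule.span ℝ P →
      x * y ∈ Submodule.span ℝ P := by
    have key1 : ∀ a ∈ P, ∀ y ∈ Submodule.span ℝ P, a * y ∈ Submodule.span ℝ P := by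
      intro a ha y hy
      induction hy using Submodule.span_induction with
      | mem b hb => exact Submodule.subset_span (hmulP a ha b hb)
      | zero => rw [mul_zero]; exact Submodule.zero_mem _
      | add x y hx hy ihx ihy => rw [mul_add]; exact Submodule.add_mem _ ihx ihy
      | smul r x hx ihx => rw [mul_smul_comm]; exact Submodule.smul_mem _ r ihx
    intro x y hx hy
    induction hx using Submodule.span_induction with
    | mem a ha => exact key1 a ha y hy
    | zero => rw [zero_mul]; exact Submodule.zero_mem _
    | add x₁ x₂ hx₁ hx₂ ih₁ ih₂ => rw [add_mul]; exact Submodule.add_mem _ ih₁ ih₂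
    | smul r x₁ hx₁ ih => rw [smul_mul_assoc]; exact Submodule.smul_mem _ r ih
  set S : Subalgebra ℝ C(X × X, ℝ) := (Submodule.span ℝ P).toSubalgebra hone hmul with hS
  have hsep : S.SeparatesPoints := by
    rintro p q hpq
    rcases Prod.ext_iff.not.1 hpq |> not_and_or.1 with h1 | h2
    · refine ⟨_, ⟨ContinuousMap.mk (fun x : X × X => dist x.1 q.1)
        ((continuous_fst.dist continuous_const)), ?_, rfl⟩, ?_⟩
      · apply Submodule.subset_span
        refine ⟨ContinuousMap.mk (fun x => dist x q.1) (continuous_id.dist continuous_const),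
          1, fun x => by simp⟩
      · simpa using fun h => h1 (dist_eq_zero.1 (by simpa using h))
    · refine ⟨_, ⟨ContinuousMap.mk (fun x : X × X => dist x.2 q.2)
        ((continuous_snd.dist continuous_const)), ?_, rfl⟩, ?_⟩
      · apply Submodule.subset_span
        refine ⟨1, ContinuousMap.mk (fun x => dist x q.2) (continuous_id.dist continuous_const),
          fun x => by simp⟩
      · simpa using fun h => h2 (dist_eq_zero.1 (by simpa using h))
  have htop := ContinuousMap.subalgebra_topologicalClosure_eq_top_of_separatesPoints S hsep
  -- step 4: conclude by uniform approximation
  intro g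
  have hg : g ∈ closure (S : Set C(X × X, ℝ)) := by
    have hmem : g ∈ S.topologicalClosure := by rw [htop]; trivial
    rw [← Subalgebra.topologicalClosure_coe]
    exact hmem
  obtain ⟨seq, hseqmem, hseqlim⟩ := mem_closure_iff_seq_limit.1 hg
  refine TendstoUniformly.continuous (p := (atTop : Filter ℕ))
    (F := fun (n : ℕ) (t : X) => ∫ p, (seq n) p ∂(σ t : Measure (X × X))) ?_
    (Filter.Eventually.of_forall fun n => hspan_cont _ (hseqmem n)).frequently
  rw [Metric.tendstoUniformly_iff]
  intro ε hε
  filter_upwards [Metric.tendsto_nhds.1 hseqlim ε hε] with n hn t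
  rw [Real.dist_eq]
  have hdiff : (∫ p, g p ∂(σ t : Measure (X × X))) - ∫ p, (seq n) p ∂(σ t : Measure (X × X))
      = ∫ p, (g p - (seq n) p) ∂(σ t : Measure (X × X)) :=
    (integral_sub (hintc g t) (hintc (seq n) t)).symm
  rw [hdiff]
  have hb : ∀ p : X × X, ‖g p - (seq n) p‖ ≤ dist (seq n) g := fun p => by
    rw [← dist_eq_norm]
    exact le_trans (ContinuousMap.dist_apply_le_dist p) (le_of_eq (dist_comm g (seq n)))
  have hnorm := norm_integral_le_of_norm_le_const (μ := (σ t : Measure (X × X)))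
    (Filter.Eventually.of_forall hb)
  rw [Real.norm_eq_abs] at hnorm
  calc |∫ p, (g p - (seq n) p) ∂(σ t : Measure (X × X))|
      ≤ dist (seq n) g * ((σ t : Measure (X × X)) Set.univ).toReal := hnorm
    _ = dist (seq n) g := by simp [measure_univ]
    _ < ε := hn
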